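/- Let W be a group and w ∈ W an element expressible as a product of two involutions. Then the reflection-length-type bound holds: for any conjugacy-invariant symmetric subset R ⊆ W with w's involution factors a, b ∈ ⟨R⟩, one has ℓ_R(w^n) ≤ ℓ_R(a) + ℓ_R(b) for odd n, and ℓ_R(w^n) ≤ 2·min{ℓ_R(a), ℓ_R(b)} for even n. In particular {ℓ_R(w^n)}_{n≥1} is bounded and the stable length sℓ_R(w) = 0. -/

import Mathlib

open Filter

/-- Word length with respect to a subset `Y` of a group. -/
noncomputable def wlen {G : Type*} [Group G] (Y : Set G) (g : G) : ℕ∞ :=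
  ⨅ (l : List G) (_ : ∀ x ∈ l, x ∈ Y) (_ : l.prod = g), (l.length : ℕ∞)

private lemma wlen_le {G : Type*} [Group G] (Y : Set G) {g : G} (l : List G)
    (h1 : ∀ x ∈ l, x ∈ Y) (h2 : l.prod = g) : wlen Y g ≤ (l.length : ℕ∞) :=
  iInf_le_of_le l (iInf_le_of_le h1 (iInf_le_of_le h2 le_rfl))

private lemma wlen_exists {G : Type*} [Group G] {Y : Set G} {g : G} (h : wlen Y g ≠ ⊤) :
    ∃ l : List G, (∀ x ∈ l, x ∈ Y) ∧ l.prod = g ∧ (l.length : ℕ∞) ≤ wlen Y g := by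
  set m := (wlen Y g).toNat with hm
  have hmeq : (m : ℕ∞) = wlen Y g := ENat.coe_toNat h
  have hlt : wlen Y g < ((m + 1 : ℕ) : ℕ∞) := by
    rw [← hmeq]; exact_mod_cast Nat.lt_succ_self m
  rw [wlen] at hlt
  simp only [iInf_lt_iff] at hlt
  obtain ⟨l, h1, h2, h3⟩ := hlt
  refine ⟨l, h1, h2, ?_⟩
  have : l.length ≤ m := by exact_mod_cast Nat.lt_succ_iff.mp (by exact_mod_cast h3)
  calc (l.length : ℕ∞) ≤ (m : ℕ∞) := by exact_mod_cast this
    _ = wlen Y g := hmeq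

private lemma wlen_mul_le {G : Type*} [Group G] (Y : Set G) (g h : G) :
    wlen Y (g * h) ≤ wlen Y g + wlen Y h := by
  by_cases hg : wlen Y g = ⊤
  · simp [hg]
  by_cases hh : wlen Y h = ⊤
  · simp [hh]
  obtain ⟨l1, hl1, hp1, hn1⟩ := wlen_exists hg
  obtain ⟨l2, hl2, hp2, hn2⟩ := wlen_exists hh
  calc wlen Y (g * h) ≤ ((l1 ++ l2).length : ℕ∞) := by
        refine wlen_le Y (l1 ++ l2) ?_ (by rw [List.prod_append, hp1, hp2])
        intro x hx
        rcases List.mem_append.mp hx with hx | hx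
        · exact hl1 x hx
        · exact hl2 x hx
    _ = (l1.length : ℕ∞) + l2.length := by push_cast [List.length_append]; rfl
    _ ≤ wlen Y g + wlen Y h := add_le_add hn1 hn2

private lemma wlen_conj_le {G : Type*} [Group G] {Y : Set G}
    (hYconj : ∀ r ∈ Y, ∀ x : G, x * r * x⁻¹ ∈ Y) (g c : G) :
    wlen Y (c * g * c⁻¹) ≤ wlen Y g := by
  by_cases hg : wlen Y g = ⊤
  · simp [hg]
  obtain ⟨l, hl, hp, hn⟩ := wlen_exists hg
  have hprod : ∀ l' : List G, (l'.map fun r => c * r * c⁻¹).prod = c * l'.prod * c⁻¹ := by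
    intro l'
    induction l' with
    | nil => simp
    | cons x t ih => simp only [List.map_cons, List.prod_cons, ih]; group
  calc wlen Y (c * g * c⁻¹) ≤ (((l.map fun r => c * r * c⁻¹)).length : ℕ∞) := by
        refine wlen_le Y _ ?_ (by rw [hprod, hp])
        intro x hx
        obtain ⟨r, hr, rfl⟩ := List.mem_map.mp hx
        exact hYconj r (hl r hr) c
    _ = (l.length : ℕ∞) := by rw [List.length_map]
    _ ≤ wlen Y g := hn

private lemma wlen_inv_le {G : Type*} [Group G] {Y : Set G}
    (hYsymm : ∀ r ∈ Y, r⁻¹ ∈ Y) (g : G) : wlen Y g⁻¹ ≤ wlen Y g := by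
  by_cases hg : wlen Y g = ⊤
  · simp [hg]
  obtain ⟨l, hl, hp, hn⟩ := wlen_exists hg
  calc wlen Y g⁻¹ ≤ (((l.map fun x => x⁻¹).reverse).length : ℕ∞) := by
        refine wlen_le Y _ ?_ (by rw [← List.prod_inv_reverse, hp])
        intro x hx
        rw [List.mem_reverse, List.mem_map] at hx
        obtain ⟨r, hr, rfl⟩ := hx
        exact hYsymm r (hl r hr)
    _ = (l.length : ℕ∞) := by rw [List.length_reverse, List.length_map]
    _ ≤ wlen Y g := hn

private lemma wlen_ne_top_of_mem_closure {G : Type*} [Group G] {Y : Set G}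
    (hYsymm : ∀ r ∈ Y, r⁻¹ ∈ Y) {g : G} (hg : g ∈ Subgroup.closure Y) :
    wlen Y g ≠ ⊤ := by
  have : ∃ l : List G, (∀ x ∈ l, x ∈ Y) ∧ l.prod = g := by
    induction hg using Subgroup.closure_induction with
    | mem x hx => exact ⟨[x], by simpa using hx, by simp⟩
    | one => exact ⟨[], by simp, by simp⟩
    | mul x y _ _ ihx ihy =>
        obtain ⟨l1, hl1, hp1⟩ := ihx
        obtain ⟨l2, hl2, hp2⟩ := ihy
        refine ⟨l1 ++ l2, ?_, by rw [List.prod_append, hp1, hp2]⟩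
        intro z hz
        rcases List.mem_append.mp hz with hz | hz
        · exact hl1 z hz
        · exact hl2 z hz
    | inv x _ ihx =>
        obtain ⟨l, hl, hp⟩ := ihx
        refine ⟨(l.map fun x => x⁻¹).reverse, ?_, by rw [← List.prod_inv_reverse, hp]⟩
        intro z hz
        rw [List.mem_reverse, List.mem_map] at hz
        obtain ⟨r, hr, rfl⟩ := hz
        exact hYsymm r (hl r hr)
  obtain ⟨l, hl, hp⟩ := this
  exact fun htop => by
    have := wlen_le Y l hl hp
    rw [htop] at this
    exact (ENat.coe_lt_top l.length).not_ge (by simpa using this)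

private lemma key_comm {W : Type*} [Group W] {a b w : W} (ha : a ^ 2 = 1) (hb : b ^ 2 = 1)
    (hw : w = a * b) : ∀ k : ℕ, a * (w⁻¹) ^ k = w ^ k * a := by
  have ha' : a⁻¹ = a := by
    rw [inv_eq_iff_mul_eq_one, ← sq, ha]
  have hb' : b⁻¹ = b := by
    rw [inv_eq_iff_mul_eq_one, ← sq, hb]
  have step : a * w⁻¹ = w * a := by
    rw [hw, mul_inv_rev, ha', hb', mul_assoc]
  intro k
  induction k with
  | zero => simp
  | succ k ih =>
      calc a * w⁻¹ ^ (k + 1) = a * (w⁻¹ ^ k * w⁻¹) := by rw [pow_succ]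
        _ = (a * w⁻¹ ^ k) * w⁻¹ := by rw [mul_assoc]
        _ = w ^ k * a * w⁻¹ := by rw [ih]
        _ = w ^ k * (a * w⁻¹) := by rw [mul_assoc]
        _ = w ^ k * (w * a) := by rw [step]
        _ = w ^ (k + 1) * a := by rw [← mul_assoc, ← pow_succ]

private lemma odd_decomp {W : Type*} [Group W] {a b w : W} (ha : a ^ 2 = 1) (hb : b ^ 2 = 1)
    (hw : w = a * b) (k : ℕ) : (w ^ k * a * (w ^ k)⁻¹) * b = w ^ (2 * k + 1) := by
  rw [← inv_pow]
  calc w ^ k * a * w⁻¹ ^ k * b = w ^ k * (a * w⁻¹ ^ k) * b := by rw [mul_assoc (w ^ k)]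
    _ = w ^ k * (w ^ k * a) * b := by rw [key_comm ha hb hw k]
    _ = w ^ k * w ^ k * (a * b) := by group
    _ = w ^ (2 * k + 1) := by rw [← hw, ← pow_add, ← pow_succ, two_mul]

private lemma even_decomp {W : Type*} [Group W] {a b w : W} (ha : a ^ 2 = 1) (hb : b ^ 2 = 1)
    (hw : w = a * b) (k : ℕ) : (w ^ k * a * (w ^ k)⁻¹) * a = w ^ (2 * k) := by
  rw [← inv_pow]
  calc w ^ k * a * w⁻¹ ^ k * a = w ^ k * (a * w⁻¹ ^ k) * a := by rw [mul_assoc (w ^ k)]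
    _ = w ^ k * (w ^ k * a) * a := by rw [key_comm ha hb hw k]
    _ = w ^ k * w ^ k * (a * a) := by group
    _ = w ^ k * w ^ k * a ^ 2 := by rw [sq]
    _ = w ^ (2 * k) := by rw [ha, mul_one, ← pow_add, two_mul]

private lemma even_bound {W : Type*} [Group W] {a b w : W} (ha : a ^ 2 = 1) (hb : b ^ 2 = 1)
    (hw : w = a * b) {R : Set W} (hRconj : ∀ r ∈ R, ∀ x : W, x * r * x⁻¹ ∈ R) (k : ℕ) :
    wlen R (w ^ (2 * k)) ≤ 2 * wlen R a := by
  rw [← even_decomp ha hb hw k]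
  calc wlen R ((w ^ k * a * (w ^ k)⁻¹) * a)
      ≤ wlen R (w ^ k * a * (w ^ k)⁻¹) + wlen R a := wlen_mul_le R _ _
    _ ≤ wlen R a + wlen R a := add_le_add_left (wlen_conj_le hRconj a (w ^ k)) _
    _ = 2 * wlen R a := (two_mul _).symm

theorem bounded_powers_of_product_of_involutions {W : Type*} [Group W]
    (a b w : W) (ha : a ^ 2 = 1) (hb : b ^ 2 = 1) (hw : w = a * b)
    (R : Set W) (hRsymm : ∀ r ∈ R, r⁻¹ ∈ R)
    (hRconj : ∀ r ∈ R, ∀ x : W, x * r * x⁻¹ ∈ R)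
    (haR : a ∈ Subgroup.closure R) (hbR : b ∈ Subgroup.closure R) :
    (∀ n : ℕ, Odd n → wlen R (w ^ n) ≤ wlen R a + wlen R b) ∧
      (∀ n : ℕ, Even n → wlen R (w ^ n) ≤ 2 * min (wlen R a) (wlen R b)) ∧
      (∃ B : ℕ, ∀ n : ℕ, 1 ≤ n → wlen R (w ^ n) ≤ (B : ℕ∞)) ∧
      Tendsto (fun n : ℕ => ((wlen R (w ^ n)).toNat : ℝ) / n) atTop (nhds 0) := by
  have hwinv : w⁻¹ = b * a := by
    have ha' : a⁻¹ = a := by rw [inv_eq_iff_mul_eq_one, ← sq, ha]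
    have hb' : b⁻¹ = b := by rw [inv_eq_iff_mul_eq_one, ← sq, hb]
    rw [hw, mul_inv_rev, ha', hb']
  have hodd : ∀ n : ℕ, Odd n → wlen R (w ^ n) ≤ wlen R a + wlen R b := by
    intro n ⟨k, hk⟩
    have hn : n = 2 * k + 1 := by omega
    rw [hn, ← odd_decomp ha hb hw k]
    calc wlen R ((w ^ k * a * (w ^ k)⁻¹) * b)
        ≤ wlen R (w ^ k * a * (w ^ k)⁻¹) + wlen R b := wlen_mul_le R _ _
      _ ≤ wlen R a + wlen R b := add_le_add_left (wlen_conj_le hRconj a (w ^ k)) _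
  have heven : ∀ n : ℕ, Even n → wlen R (w ^ n) ≤ 2 * min (wlen R a) (wlen R b) := by
    intro n ⟨k, hk⟩
    have hn : n = 2 * k := by omega
    subst hn
    have h1 : wlen R (w ^ (2 * k)) ≤ 2 * wlen R a := even_bound ha hb hw hRconj k
    have h2 : wlen R (w ^ (2 * k)) ≤ 2 * wlen R b := by
      have hb2 : wlen R ((w⁻¹) ^ (2 * k)) ≤ 2 * wlen R b := by
        have := even_bound hb ha hwinv hRconj k
        exact this
      calc wlen R (w ^ (2 * k)) = wlen R (((w⁻¹) ^ (2 * k))⁻¹) := by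
            rw [inv_pow, inv_inv]
        _ ≤ wlen R ((w⁻¹) ^ (2 * k)) := wlen_inv_le hRsymm _
        _ ≤ 2 * wlen R b := hb2
    calc wlen R (w ^ (2 * k)) ≤ min (2 * wlen R a) (2 * wlen R b) := le_min h1 h2
      _ = 2 * min (wlen R a) (wlen R b) := by
          rcases le_total (wlen R a) (wlen R b) with h | h
          · rw [min_eq_left h, min_eq_left (by gcongr)]
          · rw [min_eq_right h, min_eq_right (by gcongr)]
  have haT : wlen R a ≠ ⊤ := wlen_ne_top_of_mem_closure hRsymm haR
  have hbT : wlen R b ≠ ⊤ := wlen_ne_top_of_mem_closure hRsymm hbR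
  set A := (wlen R a).toNat with hA
  set C := (wlen R b).toNat with hC
  have hAeq : (A : ℕ∞) = wlen R a := ENat.coe_toNat haT
  have hCeq : (C : ℕ∞) = wlen R b := ENat.coe_toNat hbT
  have hBound : ∀ n : ℕ, 1 ≤ n → wlen R (w ^ n) ≤ ((2 * (A + C) : ℕ) : ℕ∞) := by
    intro n hn
    rcases Nat.even_or_odd n with he | ho
    · calc wlen R (w ^ n) ≤ 2 * min (wlen R a) (wlen R b) := heven n he
        _ ≤ 2 * wlen R a := by gcongr; exact min_le_left _ _
        _ = ((2 * A : ℕ) : ℕ∞) := by rw [← hAeq]; push_cast; ring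
        _ ≤ ((2 * (A + C) : ℕ) : ℕ∞) := by
            exact_mod_cast Nat.mul_le_mul_left 2 (Nat.le_add_right A C)
    · calc wlen R (w ^ n) ≤ wlen R a + wlen R b := hodd n ho
        _ = ((A + C : ℕ) : ℕ∞) := by rw [← hAeq, ← hCeq]; push_cast; ring
        _ ≤ ((2 * (A + C) : ℕ) : ℕ∞) := by
            exact_mod_cast Nat.le_mul_of_pos_left (A + C) (by norm_num)
  refine ⟨hodd, heven, ⟨2 * (A + C), hBound⟩, ?_⟩
  set B : ℕ := 2 * (A + C) with hBdef
  apply squeeze_zero' (Eventually.of_forall fun n => by positivity)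
    (g := fun n : ℕ => (B : ℝ) / n) ?_ (tendsto_const_div_atTop_nhds_zero_nat (B : ℝ))
  filter_upwards [eventually_ge_atTop 1] with n hn
  have h1 : (wlen R (w ^ n)).toNat ≤ B := by
    have := hBound n hn
    have := ENat.toNat_le_toNat this (by simp)
    simpa using this
  have hn0 : (0 : ℝ) < n := by exact_mod_cast hn
  gcongr
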